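/- For each nonzero rational number u, let g_u(x) = x^6 - 4x^5 + 8(1+u)x^4 - (10+32u)x^3 + 8(1+6u+2u^2)x^2 - 4(1+6u+16u^2)x + 64u^2 + 1. Then the discriminant of g_u is nonzero, i.e., g_u has no repeated roots over the algebraic closure of ℚ. -/
import Mathlib
open Polynomial
noncomputable def gPoly (u : ℚ) : Polynomial ℚ :=
  X ^ 6 - 4 * X ^ 5 + C (8 * (1 + u)) * X ^ 4 - C (10 + 32 * u) * X ^ 3
    + C (8 * (1 + 6 * u + 2 * u ^ 2)) * X ^ 2
    - C (4 * (1 + 6 * u + 16 * u ^ 2)) * X + C (64 * u ^ 2 + 1)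
lemma gDeriv (u : ℚ) : derivative (gPoly u) =
    6 * X ^ 5 - 20 * X ^ 4 + (32 + 32 * C u) * X ^ 3
      - (30 + 96 * C u) * X ^ 2 + (16 + 96 * C u + 32 * C u ^ 2) * X
      - (4 + 24 * C u + 64 * C u ^ 2) := by
  have h : gPoly u = X ^ 6 - 4 * X ^ 5 + (8 + 8 * C u) * X ^ 4 - (10 + 32 * C u) * X ^ 3
      + (8 + 48 * C u + 16 * C u ^ 2) * X ^ 2
      - (4 + 24 * C u + 64 * C u ^ 2) * X + (1 + 64 * C u ^ 2) := by
    simp only [gPoly, C_add, C_mul, C_pow, map_ofNat, C_1]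
    ring
  rw [h]
  simp [derivative_pow, map_natCast, map_ofNat]
  ring
lemma cub_ne (w : ℚ) : w ^ 3 + 108 * w ^ 2 - 104 * w + 36 ≠ 0 := by
  intro h
  have hint : IsIntegral ℤ w := by
    refine ⟨X ^ 3 + C 108 * X ^ 2 - C 104 * X + C 36, ?_, ?_⟩
    · monicity!
    · simp
      linear_combination h
  obtain ⟨n, hn⟩ := IsIntegrallyClosed.isIntegral_iff.mp hint
  have hn' : (n : ℚ) = w := by exact_mod_cast hn
  rw [← hn'] at h
  have hz : n ^ 3 + 108 * n ^ 2 - 104 * n + 36 = 0 := by exact_mod_cast h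
  have hmod : ∀ m : ZMod 8, m ^ 3 + 108 * m ^ 2 - 104 * m + 36 ≠ 0 := by decide
  have := congrArg (Int.cast : ℤ → ZMod 8) hz
  push_cast at this
  exact hmod n this

noncomputable def gA (u : ℚ) : Polynomial ℚ :=
  C (((9)/512)*u^2 + ((-199)/256)*u^3 + ((787)/64)*u^4 + ((49)/8)*u^5 + ((-527)/4)*u^6 + (-320)*u^7 + (1408)*u^8 + (256)*u^9 : ℚ) * X^0
  + C (((-27)/512)*u^2 + ((615)/256)*u^3 + ((-2443)/64)*u^4 + ((-715)/16)*u^5 + (1602)*u^6 + (-1312)*u^7 + (-224)*u^8 : ℚ) * X^1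
  + C (((81)/1024)*u^2 + ((-513)/128)*u^3 + ((1241)/16)*u^4 + ((-655)/2)*u^5 + ((-1085)/2)*u^6 + (1224)*u^7 + (256)*u^8 : ℚ) * X^2
  + C (((-63)/1024)*u^2 + ((827)/256)*u^3 + ((-4231)/64)*u^4 + ((743)/2)*u^5 + (-228)*u^6 + (-40)*u^7 : ℚ) * X^3
  + C (((27)/1024)*u^2 + ((-183)/128)*u^3 + ((1947)/64)*u^4 + ((-1563)/8)*u^5 + (198)*u^6 + (48)*u^7 : ℚ) * X^4

noncomputable def gB (u : ℚ) : Polynomial ℚ :=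
  C (((9)/2048)*u^2 + ((-113)/512)*u^3 + ((295)/64)*u^4 + ((-1121)/32)*u^5 + ((1201)/4)*u^6 + (-1232)*u^7 + (1248)*u^8 + (256)*u^9 : ℚ) * X^0
  + C (((-27)/2048)*u^2 + ((147)/256)*u^3 + ((-535)/64)*u^4 + ((-61)/2)*u^5 + ((3215)/8)*u^6 + (44)*u^7 + (-672)*u^8 + (-128)*u^9 : ℚ) * X^1
  + C (((45)/2048)*u^2 + ((-529)/512)*u^3 + ((557)/32)*u^4 + ((-251)/32)*u^5 + ((-1185)/2)*u^6 + (576)*u^7 + (112)*u^8 : ℚ) * X^2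
  + C (((-45)/2048)*u^2 + ((287)/256)*u^3 + ((-1401)/64)*u^4 + ((1549)/16)*u^5 + ((549)/4)*u^6 + (-300)*u^7 + (-64)*u^8 : ℚ) * X^3
  + C (((27)/2048)*u^2 + ((-357)/512)*u^3 + ((1843)/128)*u^4 + ((-669)/8)*u^5 + (60)*u^6 + (12)*u^7 : ℚ) * X^4
  + C (((-9)/2048)*u^2 + ((61)/256)*u^3 + ((-649)/128)*u^4 + ((521)/16)*u^5 + (-33)*u^6 + (-8)*u^7 : ℚ) * X^5

def cval (u : ℚ) : ℚ := u ^ 7 * ((16 * u) ^ 3 + 108 * (16 * u) ^ 2 - 104 * (16 * u) + 36)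

lemma bezout (u : ℚ) :
    gA u * gPoly u + gB u * derivative (gPoly u) = C (cval u) := by
  rw [gDeriv]
  apply Polynomial.funext
  intro x
  simp only [gA, gB, gPoly, cval, eval_add, eval_sub, eval_mul, eval_pow, eval_C, eval_X,
    eval_ofNat]
  ring

lemma cval_ne (u : ℚ) (hu : u ≠ 0) : cval u ≠ 0 :=
  mul_ne_zero (pow_ne_zero _ hu) (cub_ne (16 * u))

lemma gPoly_separable (u : ℚ) (hu : u ≠ 0) : (gPoly u).Separable := by
  have hc := cval_ne u hu
  refine ⟨C (cval u)⁻¹ * gA u, C (cval u)⁻¹ * gB u, ?_⟩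
  rw [mul_assoc, mul_assoc, ← mul_add, bezout, ← C_mul, inv_mul_cancel₀ hc, C_1]

theorem gPoly_squarefree (u : ℚ) (hu : u ≠ 0) :
    Squarefree ((gPoly u).map (algebraMap ℚ (AlgebraicClosure ℚ))) := by
  exact ((gPoly_separable u hu).map).squarefree
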